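/- Let A be a group with action on itself in which the self-action triple is defined by a·a' = a+a'-a, a'^{▷a} = a'^a, and a^{∘a'} = a^{a'} (without subtracting a). Then in general this triple is NOT a derived action: specifically, there exists a group with action on itself for which condition (2_A): (b+b')^{∘a} = b^{∘a} + b·(b'^{∘a}) fails (equivalently, (1_B) fails). -/
import Mathlib


/-- A group with action on itself: a (not necessarily abelian) additive group `G`
with a map `act g h = g^h` satisfying `g^(h+h') = (g^h)^{h'}`, `g^0 = g`,
`(g+g')^h = g^h + g'^h`. -/
class Gwa (G : Type*) extends AddGroup G where
  act : G → G → G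
  act_add : ∀ g h h' : G, act g (h + h') = act (act g h) h'
  act_zero : ∀ g : G, act g 0 = g
  add_act : ∀ g g' h : G, act (g + g') h = act g h + act g' h

open Gwa

/-- Morphisms of groups with action on themselves. -/
def IsGwaHom {G H : Type*} [Gwa G] [Gwa H] (f : G → H) : Prop :=
  (∀ a b : G, f (a + b) = f a + f b) ∧ ∀ a b : G, f (act a b) = act (f a) (f b)

/-- A "group with action on itself" structure given by explicit operations. -/
structure GwaStruct (G : Type*) where
  add : G → G → G
  zero : G
  neg : G → G
  act : G → G → G
  add_assoc : ∀ a b c : G, add (add a b) c = add a (add b c)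
  zero_add : ∀ a : G, add zero a = a
  add_zero : ∀ a : G, add a zero = a
  neg_add : ∀ a : G, add (neg a) a = zero
  act_add : ∀ g h h' : G, act g (add h h') = act (act g h) h'
  act_zero : ∀ g : G, act g zero = g
  add_act : ∀ g g' h : G, act (add g g') h = add (act g h) (act g' h)

theorem unshifted_self_action_not_derived :
    ∃ (G : Type) (s : GwaStruct G) (b b' a : G),
      s.act (s.add b b') a ≠
        s.add (s.act b a) (s.add (s.add b (s.act b' a)) (s.neg b)) := by
  refine ⟨Equiv.Perm (Fin 3),
    { add := fun a b => a * b
      zero := 1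
      neg := fun a => a⁻¹
      act := fun g h => h⁻¹ * g * h
      add_assoc := fun a b c => mul_assoc a b c
      zero_add := fun a => one_mul a
      add_zero := fun a => mul_one a
      neg_add := fun a => inv_mul_cancel a
      act_add := fun g h h' => by group
      act_zero := fun g => by group
      add_act := fun g g' h => by group },
    Equiv.swap 1 2, Equiv.swap 1 2, Equiv.swap 0 1, ?_⟩
  decide
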